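/- Let f : ℝⁿ → ℝ be Lipschitz with Lipschitz constant L, let x ∈ ℝⁿ, let W, W' be linear subspaces of ℝⁿ, let α, α' be linear functionals on ℝⁿ, and let δ > 0. Define m(f,x,W,α,δ) := sup { |f(x+h) − f(x) − α h| / |h| : h ∈ W, 0 < |h| ≤ δ }, and similarly m' := m(f,x,W',α',δ). Then m ≤ m' + ‖α' − α‖ + (L + ‖α'‖)·d, where d := d_gr(W,W') is the Grassmannian distance between W and W' (the smallest d ≥ 0 such that every unit vector of each subspace is within distance d of the other subspace) and ‖·‖ denotes the operator norm of a linear functional. -/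

import Mathlib

open Metric Set

/-- The deviation `m(f,x,W,α,δ)` of `f` from the linear functional `α` around `x`,
measured along the subspace `W` at scale `δ`. -/
noncomputable def devLin {n : ℕ} (f : EuclideanSpace ℝ (Fin n) → ℝ)
    (x : EuclideanSpace ℝ (Fin n)) (W : Submodule ℝ (EuclideanSpace ℝ (Fin n)))
    (α : EuclideanSpace ℝ (Fin n) →L[ℝ] ℝ) (δ : ℝ) : ℝ :=
  sSup ((fun h => |f (x + h) - f x - α h| / ‖h‖) ''
    {h : EuclideanSpace ℝ (Fin n) | h ∈ W ∧ 0 < ‖h‖ ∧ ‖h‖ ≤ δ})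

/-- The Grassmannian distance between two subspaces, i.e. the Hausdorff distance between
their intersections with the closed unit ball. -/
noncomputable def grDist {n : ℕ} (W W' : Submodule ℝ (EuclideanSpace ℝ (Fin n))) : ℝ :=
  Metric.hausdorffDist ((W : Set (EuclideanSpace ℝ (Fin n))) ∩ closedBall 0 1)
    ((W' : Set (EuclideanSpace ℝ (Fin n))) ∩ closedBall 0 1)

lemma devLin_nonneg {n : ℕ} (f : EuclideanSpace ℝ (Fin n) → ℝ)
    (x : EuclideanSpace ℝ (Fin n)) (W : Submodule ℝ (EuclideanSpace ℝ (Fin n)))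
    (α : EuclideanSpace ℝ (Fin n) →L[ℝ] ℝ) (δ : ℝ) : 0 ≤ devLin f x W α δ := by
  apply Real.sSup_nonneg
  rintro y ⟨h, ⟨_, hpos, _⟩, rfl⟩
  positivity

lemma devLin_bdd {n : ℕ} (f : EuclideanSpace ℝ (Fin n) → ℝ) (L : NNReal)
    (hf : LipschitzWith L f) (x : EuclideanSpace ℝ (Fin n))
    (W : Submodule ℝ (EuclideanSpace ℝ (Fin n)))
    (α : EuclideanSpace ℝ (Fin n) →L[ℝ] ℝ) (δ : ℝ) :
    BddAbove ((fun h => |f (x + h) - f x - α h| / ‖h‖) ''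
      {h : EuclideanSpace ℝ (Fin n) | h ∈ W ∧ 0 < ‖h‖ ∧ ‖h‖ ≤ δ}) := by
  refine ⟨(L : ℝ) + ‖α‖, ?_⟩
  rintro y ⟨h, ⟨_, hpos, _⟩, rfl⟩
  rw [div_le_iff₀ hpos]
  have h1 : |f (x + h) - f x| ≤ (L : ℝ) * ‖h‖ := by
    have := hf.dist_le_mul (x + h) x
    rwa [Real.dist_eq, dist_self_add_left] at this
  have h2 : |α h| ≤ ‖α‖ * ‖h‖ := α.le_opNorm h
  calc |f (x + h) - f x - α h| ≤ |f (x + h) - f x| + |α h| := abs_sub _ _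
    _ ≤ (L : ℝ) * ‖h‖ + ‖α‖ * ‖h‖ := add_le_add h1 h2
    _ = ((L : ℝ) + ‖α‖) * ‖h‖ := by ring

/-- `m(f,x,W,α,δ) ≤ m(f,x,W',α',δ) + ‖α' − α‖ + (L + ‖α'‖)·d_gr(W,W')`. -/
theorem stmt_1 {n : ℕ} (f : EuclideanSpace ℝ (Fin n) → ℝ) (L : NNReal)
    (hf : LipschitzWith L f) (x : EuclideanSpace ℝ (Fin n))
    (W W' : Submodule ℝ (EuclideanSpace ℝ (Fin n)))
    (α α' : EuclideanSpace ℝ (Fin n) →L[ℝ] ℝ) (δ : ℝ) (hδ : 0 < δ) :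
    devLin f x W α δ ≤ devLin f x W' α' δ + ‖α' - α‖ + ((L : ℝ) + ‖α'‖) * grDist W W' := by
  set d := grDist W W' with hdd
  have hd0 : 0 ≤ d := Metric.hausdorffDist_nonneg
  have hm'0 : 0 ≤ devLin f x W' α' δ := devLin_nonneg f x W' α' δ
  have hRHS : 0 ≤ devLin f x W' α' δ + ‖α' - α‖ + ((L : ℝ) + ‖α'‖) * d := by positivity
  apply Real.sSup_le _ hRHS
  rintro y ⟨h, ⟨hW, hpos, hle⟩, rfl⟩
  -- find h' ∈ W' close to h
  set S' : Set (EuclideanSpace ℝ (Fin n)) := (W' : Set _) ∩ closedBall 0 1 with hS'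
  have hS'ne : S'.Nonempty := ⟨0, W'.zero_mem, mem_closedBall_self zero_le_one⟩
  have hS'c : IsCompact S' :=
    (isCompact_closedBall (0 : EuclideanSpace ℝ (Fin n)) 1).inter_left
      (Submodule.closed_of_finiteDimensional W')
  set u : EuclideanSpace ℝ (Fin n) := ‖h‖⁻¹ • h with hu
  have hune : h ≠ 0 := by intro h0; simp [h0] at hpos
  have hunorm : ‖u‖ = 1 := by rw [hu, norm_smul, norm_inv, norm_norm, inv_mul_cancel₀ hpos.ne']
  have huS : u ∈ (W : Set _) ∩ closedBall 0 1 := by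
    refine ⟨W.smul_mem _ hW, ?_⟩
    simp [hunorm]
  have hfin : EMetric.hausdorffEdist ((W : Set (EuclideanSpace ℝ (Fin n))) ∩ closedBall 0 1) S' ≠ ⊤ := by
    apply Metric.hausdorffEdist_ne_top_of_nonempty_of_bounded
    · exact ⟨0, W.zero_mem, mem_closedBall_self zero_le_one⟩
    · exact hS'ne
    · exact (isBounded_closedBall).subset inter_subset_right
    · exact (isBounded_closedBall).subset inter_subset_right
  have hinf : infDist u S' ≤ d := Metric.infDist_le_hausdorffDist_of_mem huS hfin
  obtain ⟨u', hu'S, hu'd⟩ := hS'c.exists_infDist_eq_dist hS'ne u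
  have hdist : ‖u - u'‖ ≤ d := by rw [← dist_eq_norm, ← hu'd]; exact hinf
  set h' : EuclideanSpace ℝ (Fin n) := ‖h‖ • u' with hh'
  have hh'W : h' ∈ W' := W'.smul_mem _ hu'S.1
  have hh'norm : ‖h'‖ ≤ ‖h‖ := by
    rw [hh', norm_smul, Real.norm_eq_abs, abs_of_pos hpos]
    have : ‖u'‖ ≤ 1 := mem_closedBall_zero_iff.mp hu'S.2
    nlinarith
  have hhh' : ‖h - h'‖ ≤ ‖h‖ * d := by
    have : h - h' = ‖h‖ • (u - u') := by
      rw [smul_sub, hu, hh', smul_inv_smul₀ (by positivity)]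
    rw [this, norm_smul, Real.norm_eq_abs, abs_of_pos hpos]
    exact mul_le_mul_of_nonneg_left hdist hpos.le
  -- key bound on the middle term
  have hmid : |f (x + h') - f x - α' h'| ≤ devLin f x W' α' δ * ‖h‖ := by
    rcases eq_or_ne h' 0 with h0 | h0
    · simp only [h0, add_zero, map_zero, sub_zero, sub_self, abs_zero]
      positivity
    · have hpos' : 0 < ‖h'‖ := norm_pos_iff.mpr h0
      have hmem : |f (x + h') - f x - α' h'| / ‖h'‖ ≤ devLin f x W' α' δ :=
        le_csSup (devLin_bdd f L hf x W' α' δ) ⟨h', ⟨hh'W, hpos', hh'norm.trans hle⟩, rfl⟩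
      rw [div_le_iff₀ hpos'] at hmem
      calc |f (x + h') - f x - α' h'| ≤ devLin f x W' α' δ * ‖h'‖ := hmem
        _ ≤ devLin f x W' α' δ * ‖h‖ := mul_le_mul_of_nonneg_left hh'norm hm'0
  have hlip : |f (x + h) - f (x + h')| ≤ (L : ℝ) * (‖h‖ * d) := by
    have := hf.dist_le_mul (x + h) (x + h')
    rw [Real.dist_eq, dist_add_left] at this
    calc |f (x + h) - f (x + h')| ≤ (L : ℝ) * dist h h' := this
      _ ≤ (L : ℝ) * (‖h‖ * d) := by
          rw [dist_eq_norm]; exact mul_le_mul_of_nonneg_left hhh' L.coe_nonneg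
  have hα' : |α' h' - α' h| ≤ ‖α'‖ * (‖h‖ * d) := by
    calc |α' h' - α' h| = |α' (h' - h)| := by rw [map_sub]
      _ ≤ ‖α'‖ * ‖h' - h‖ := α'.le_opNorm _
      _ ≤ ‖α'‖ * (‖h‖ * d) := by
          rw [norm_sub_rev]; exact mul_le_mul_of_nonneg_left hhh' (norm_nonneg _)
  have hαα : |α' h - α h| ≤ ‖α' - α‖ * ‖h‖ := by
    have := (α' - α).le_opNorm h
    simpa using this
  rw [div_le_iff₀ hpos]
  have key : |f (x + h) - f x - α h| ≤
      |f (x + h) - f (x + h')| + |f (x + h') - f x - α' h'| + |α' h' - α' h| + |α' h - α h| := by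
    have : f (x + h) - f x - α h =
        (f (x + h) - f (x + h')) + (f (x + h') - f x - α' h') + (α' h' - α' h) + (α' h - α h) := by
      ring
    rw [this]
    calc |(f (x + h) - f (x + h')) + (f (x + h') - f x - α' h') + (α' h' - α' h) + (α' h - α h)|
        ≤ |(f (x + h) - f (x + h')) + (f (x + h') - f x - α' h') + (α' h' - α' h)| + |α' h - α h| :=
          abs_add_le _ _
      _ ≤ |(f (x + h) - f (x + h')) + (f (x + h') - f x - α' h')| + |α' h' - α' h| + |α' h - α h| := by
          gcongr; exact abs_add_le _ _
      _ ≤ |f (x + h) - f (x + h')| + |f (x + h') - f x - α' h'| + |α' h' - α' h| + |α' h - α h| := by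
          gcongr; exact abs_add_le _ _
  calc |f (x + h) - f x - α h|
      ≤ |f (x + h) - f (x + h')| + |f (x + h') - f x - α' h'| + |α' h' - α' h| + |α' h - α h| := key
    _ ≤ (L : ℝ) * (‖h‖ * d) + devLin f x W' α' δ * ‖h‖ + ‖α'‖ * (‖h‖ * d) + ‖α' - α‖ * ‖h‖ := by
        gcongr
    _ = (devLin f x W' α' δ + ‖α' - α‖ + ((L : ℝ) + ‖α'‖) * d) * ‖h‖ := by ring
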